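/- arXiv:1709.08928 — 3 statements merged into one kernel-verified Lean document; each statement's English description precedes it below -/
import Mathlib

section
/- (Inter-rack repair) Let H (S₁×N), K (S₂×N), G (L×M) be matrices over F_q and let X be an M×N matrix satisfying H Xᵀ = 0 and K Xᵀ Gᵀ = 0 (each row X_{m,*} satisfies H X_{m,*}ᵀ = 0, and K Xᵀ Gᵀ = 0). Suppose node j in rack 1 has failed with failure set γ_j ∋ j, and suppose (β_j, μ_j, r_j, τ) satisfies: (1) r_j lies in the row span of K; (2) μ_j = supp(r_j); (3) β_j ∈ Ω(H, r_j, j); (4) β_j ∩ γ_j = ∅; (5) τ ∈ Ω(G, 1). Then there exist coefficients c_{j,n} (n ∈ β_j) and d_{j,m,s} (m ∈ τ, s ∈ μ_j) in F_q such that X_{1,j} = Σ_{m∈τ} Σ_{s∈μ_j} d_{j,m,s} X_{m,s} + Σ_{n∈β_j} c_{j,n} X_{1,n}. -/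
open Matrix

/-- Inter-rack repair: with `H Xᵀ = 0` (rowwise) and `K Xᵀ Gᵀ = 0`,
if node `j` of rack `m₀` fails (failure set `γj ∋ j`) and `(βj, μj, rj, τ)` satisfies
the five criteria, then `X m₀ j` can be recovered as a linear combination of the nodes
`X m s` for `m ∈ τ, s ∈ μj` and of the surviving nodes `X m₀ n` for `n ∈ βj`. -/
theorem stmt_4 {F : Type} [Field F] [Fintype F] {S₁ S₂ L M N : ℕ}
    (H : Matrix (Fin S₁) (Fin N) F) (K : Matrix (Fin S₂) (Fin N) F)
    (G : Matrix (Fin L) (Fin M) F) (X : Matrix (Fin M) (Fin N) F)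
    (hH : ∀ m, H.mulVec (X m) = 0)
    (hKG : K * Xᵀ * Gᵀ = 0)
    (m₀ : Fin M) (j : Fin N) (γj : Finset (Fin N)) (hjγ : j ∈ γj)
    (βj μj : Finset (Fin N)) (rj : Fin N → F) (τ : Finset (Fin M))
    -- (1) `rj` lies in the row span of `K`
    (h1 : rj ∈ Submodule.span F (Set.range K))
    -- (2) `μj = supp(rj)`
    (h2 : (↑μj : Set (Fin N)) = {s | rj s ≠ 0})
    -- (3) `βj ∈ Ω(H, rj, j)`
    (h3 : ∃ h ∈ Submodule.span F (Set.range H ∪ {rj}),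
        h j ≠ 0 ∧ (↑βj : Set (Fin N)) = {i | h i ≠ 0} \ {j})
    -- (4) `βj ∩ γj = ∅`
    (h4 : βj ∩ γj = ∅)
    -- (5) `τ ∈ Ω(G, m₀)`
    (h5 : ∃ g ∈ Submodule.span F (Set.range G),
        g m₀ ≠ 0 ∧ (↑τ : Set (Fin M)) = {m | g m ≠ 0} \ {m₀}) :
    ∃ (c : Fin N → F) (d : Fin M → Fin N → F),
      X m₀ j = (∑ m ∈ τ, ∑ s ∈ μj, d m s * X m s) + ∑ n ∈ βj, c n * X m₀ n := by
  classical
  obtain ⟨h, hhmem, hhj, hβ⟩ := h3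
  obtain ⟨g, hgmem, hgm₀, hτ⟩ := h5
  -- membership characterizations
  have hβmem : ∀ n, n ∈ βj ↔ (h n ≠ 0 ∧ n ≠ j) := by
    intro n
    have := Set.ext_iff.mp hβ n
    simpa using this
  have hτmem : ∀ m, m ∈ τ ↔ (g m ≠ 0 ∧ m ≠ m₀) := by
    intro m
    have := Set.ext_iff.mp hτ m
    simpa using this
  have hμmem : ∀ s, s ∈ μj ↔ rj s ≠ 0 := by
    intro s
    have := Set.ext_iff.mp h2 s
    simpa using this
  -- vanishing on span of rows of H
  have hHspan : ∀ v ∈ Submodule.span F (Set.range H), v ⬝ᵥ X m₀ = 0 := by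
    intro v hv
    induction hv using Submodule.span_induction with
    | mem x hx =>
        obtain ⟨i, rfl⟩ := hx
        have := congrFun (hH m₀) i
        simpa [Matrix.mulVec, dotProduct] using this
    | zero => simp
    | add x y _ _ hx hy => simp [add_dotProduct, hx, hy]
    | smul a x _ hx => simp [smul_dotProduct, hx]
  -- K-G orthogonality extended to spans
  have hKGspan : ∀ k ∈ Submodule.span F (Set.range K),
      ∀ g' ∈ Submodule.span F (Set.range G),
      ∑ m, g' m * (k ⬝ᵥ X m) = 0 := by
    have base : ∀ s₂, ∀ g' ∈ Submodule.span F (Set.range G),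
        ∑ m, g' m * (K s₂ ⬝ᵥ X m) = 0 := by
      intro s₂ g' hg'
      induction hg' using Submodule.span_induction with
      | mem y hy =>
          obtain ⟨l, rfl⟩ := hy
          have h0 := congrFun (congrFun hKG s₂) l
          simp only [Matrix.mul_apply, Matrix.transpose_apply, Matrix.zero_apply] at h0
          rw [← h0]
          refine Finset.sum_congr rfl fun m _ => ?_
          simp [dotProduct, mul_comm]
      | zero => simp
      | add x y _ _ hx hy =>
          simpa [add_mul, Finset.sum_add_distrib] using congrArg₂ (· + ·) hx hy
      | smul a x _ hx =>
          simp only [Pi.smul_apply, smul_eq_mul, mul_assoc, ← Finset.mul_sum, hx, mul_zero]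
    intro k hk
    induction hk using Submodule.span_induction with
    | mem x hx =>
        obtain ⟨s₂, rfl⟩ := hx
        exact base s₂
    | zero => intro g' hg'; simp
    | add x y _ _ hx hy =>
        intro g' hg'
        have := congrArg₂ (· + ·) (hx g' hg') (hy g' hg')
        simpa [add_dotProduct, mul_add, Finset.sum_add_distrib] using this
    | smul a x _ hx =>
        intro g' hg'
        have := hx g' hg'
        simp only [smul_dotProduct, smul_eq_mul]
        calc ∑ m, g' m * (a * (x ⬝ᵥ X m)) = a * ∑ m, g' m * (x ⬝ᵥ X m) := by
              rw [Finset.mul_sum]; exact Finset.sum_congr rfl fun m _ => by ring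
          _ = 0 := by rw [this, mul_zero]
  -- decompose h
  rw [Submodule.span_union] at hhmem
  obtain ⟨y, hy, z, hz, hyz⟩ := Submodule.mem_sup.mp hhmem
  obtain ⟨a, rfl⟩ := Submodule.mem_span_singleton.mp hz
  -- h ⬝ᵥ X m₀ = a * (rj ⬝ᵥ X m₀)
  have hdot : h ⬝ᵥ X m₀ = a * (rj ⬝ᵥ X m₀) := by
    rw [← hyz, add_dotProduct, smul_dotProduct, hHspan y hy, zero_add, smul_eq_mul]
  -- restricted dot products
  have hdotμ : ∀ m, rj ⬝ᵥ X m = ∑ s ∈ μj, rj s * X m s := by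
    intro m
    rw [dotProduct]
    symm
    refine Finset.sum_subset (Finset.subset_univ _) fun x _ hx => ?_
    have : rj x = 0 := by by_contra hc; exact hx ((hμmem x).mpr hc)
    rw [this, zero_mul]
  have hjβ : j ∉ βj := fun hc => ((hβmem j).mp hc).2 rfl
  have hdotβ : h ⬝ᵥ X m₀ = h j * X m₀ j + ∑ n ∈ βj, h n * X m₀ n := by
    rw [dotProduct]
    rw [show (∑ i, h i * X m₀ i) = ∑ i ∈ insert j βj, h i * X m₀ i from
      (Finset.sum_subset (Finset.subset_univ _) fun x _ hx => ?_).symm]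
    · rw [Finset.sum_insert hjβ]
    · have hxj : x ≠ j := fun hc => hx (hc ▸ Finset.mem_insert_self j βj)
      have : h x = 0 := by
        by_contra hc
        exact hx (Finset.mem_insert_of_mem ((hβmem x).mpr ⟨hc, hxj⟩))
      rw [this, zero_mul]
  have hm₀τ : m₀ ∉ τ := fun hc => ((hτmem m₀).mp hc).2 rfl
  have hgsum : g m₀ * (rj ⬝ᵥ X m₀) + ∑ m ∈ τ, g m * (rj ⬝ᵥ X m) = 0 := by
    have h0 := hKGspan rj h1 g hgmem
    rw [show (∑ m, g m * (rj ⬝ᵥ X m)) = ∑ m ∈ insert m₀ τ, g m * (rj ⬝ᵥ X m) from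
      (Finset.sum_subset (Finset.subset_univ _) fun x _ hx => ?_).symm,
      Finset.sum_insert hm₀τ] at h0
    · exact h0
    · have hxm : x ≠ m₀ := fun hc => hx (hc ▸ Finset.mem_insert_self m₀ τ)
      have : g x = 0 := by
        by_contra hc
        exact hx (Finset.mem_insert_of_mem ((hτmem x).mpr ⟨hc, hxm⟩))
      rw [this, zero_mul]
  -- choose coefficients
  refine ⟨fun n => -(h n / h j), fun m s => -(a * g m * rj s) / (h j * g m₀), ?_⟩
  have hS : ∑ m ∈ τ, ∑ s ∈ μj, (-(a * g m * rj s) / (h j * g m₀)) * X m s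
      = (-a / (h j * g m₀)) * ∑ m ∈ τ, g m * (rj ⬝ᵥ X m) := by
    rw [Finset.mul_sum]
    refine Finset.sum_congr rfl fun m _ => ?_
    rw [hdotμ m, Finset.mul_sum, Finset.mul_sum]
    refine Finset.sum_congr rfl fun s _ => ?_
    ring
  have hC : ∑ n ∈ βj, (-(h n / h j)) * X m₀ n = (-(h j)⁻¹) * ∑ n ∈ βj, h n * X m₀ n := by
    rw [Finset.mul_sum]
    refine Finset.sum_congr rfl fun n _ => ?_
    field_simp
  rw [hS, hC]
  have E1 : h j * X m₀ j + ∑ n ∈ βj, h n * X m₀ n = a * (rj ⬝ᵥ X m₀) := by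
    rw [← hdotβ, hdot]
  set T := rj ⬝ᵥ X m₀ with hT
  set S := ∑ m ∈ τ, g m * (rj ⬝ᵥ X m) with hSdef
  set B := ∑ n ∈ βj, h n * X m₀ n with hB
  have hSval : S = -(g m₀ * T) := by linear_combination hgsum
  rw [hSval]
  field_simp
  linear_combination E1
end

section
/- Let H, K, G be matrices over F_q of sizes S₁×N, S₂×N, and L×M respectively, such that the S₁+S₂ rows of H and K together are linearly independent and G has full rank L ≤ M. Then the number of M×N matrices X over F_q satisfying H Xᵀ = 0 and K Xᵀ Gᵀ = 0 equals q^{MN − M·S₁ − L·S₂}. -/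
open Matrix Module LinearMap

section aux

variable {F : Type} [Field F] [Fintype F] {S₁ S₂ L M N : ℕ}

/-- A matrix whose `mulVecLin` is surjective has a right inverse. -/
lemma exists_right_inv {m n : Type} [Fintype m] [Fintype n] [DecidableEq m] [DecidableEq n]
    (A : Matrix m n F) (h : Function.Surjective A.mulVecLin) :
    ∃ R : Matrix n m F, A * R = 1 := by
  obtain ⟨g, hg⟩ := A.mulVecLin.exists_rightInverse_of_surjective (LinearMap.range_eq_top.2 h)
  refine ⟨LinearMap.toMatrix' g, ?_⟩
  have : Matrix.toLin' (A * LinearMap.toMatrix' g) = Matrix.toLin' (1 : Matrix m m F) := by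
    rw [Matrix.toLin'_mul, Matrix.toLin'_toMatrix', Matrix.toLin'_one, Matrix.toLin'_apply'] 
    exact hg
  exact Matrix.toLin'.injective this

lemma rank_eq_card_iff_surj {m n : Type} [Fintype m] [Fintype n]
    (A : Matrix m n F) (h : A.rank = Fintype.card m) :
    Function.Surjective A.mulVecLin := by
  rw [← LinearMap.range_eq_top]
  apply Submodule.eq_top_of_finrank_eq
  rw [← Matrix.rank, h]
  simp [Module.finrank_pi]

end aux

/-- if the rows of `H` and `K` together are linearly independent and `G`
has full rank `L ≤ M`, the number of `M × N` matrices `X` with `H Xᵀ = 0` and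
`K Xᵀ Gᵀ = 0` is exactly `q^(MN - M S₁ - L S₂)`. -/
theorem stmt_6 {F : Type} [Field F] [Fintype F] {S₁ S₂ L M N : ℕ}
    (H : Matrix (Fin S₁) (Fin N) F) (K : Matrix (Fin S₂) (Fin N) F)
    (G : Matrix (Fin L) (Fin M) F)
    (hHK : LinearIndependent F (Sum.elim H K : Fin S₁ ⊕ Fin S₂ → Fin N → F))
    (hG : G.rank = L) (hLM : L ≤ M) :
    Nat.card {X : Matrix (Fin M) (Fin N) F //
        (∀ m, H.mulVec (X m) = 0) ∧ K * Xᵀ * Gᵀ = 0} =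
      Fintype.card F ^ (M * N - (M * S₁ + L * S₂)) := by
  classical
  -- the stacked matrix
  set A : Matrix (Fin S₁ ⊕ Fin S₂) (Fin N) F := Matrix.of (Sum.elim H K) with hA
  have hArank : A.rank = Fintype.card (Fin S₁ ⊕ Fin S₂) := by
    have : LinearIndependent F A := hHK
    simpa using this.rank_matrix
  have hAsurj := rank_eq_card_iff_surj A hArank
  have hGsurj := rank_eq_card_iff_surj G (by simpa using hG)
  obtain ⟨R, hR⟩ := exists_right_inv A hAsurj
  obtain ⟨RG, hRG⟩ := exists_right_inv G hGsurj
  -- the linear map whose kernel is the solution set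
  let Φ : Matrix (Fin M) (Fin N) F →ₗ[F]
      Matrix (Fin S₁) (Fin M) F × Matrix (Fin S₂) (Fin L) F :=
    { toFun := fun X => (H * Xᵀ, K * Xᵀ * Gᵀ)
      map_add' := by intro X Y; simp [transpose_add, Matrix.mul_add, Matrix.add_mul]
      map_smul' := by intro c X; simp [transpose_smul, Matrix.mul_smul, Matrix.smul_mul]
    }
  have hΦsurj : Function.Surjective Φ := by
    rintro ⟨A₀, B₀⟩
    set P : Matrix (Fin N) (Fin S₁) F := R.submatrix _root_.id Sum.inl with hP
    set Q : Matrix (Fin N) (Fin S₂) F := R.submatrix _root_.id Sum.inr with hQ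
    have key : ∀ i j, ∑ n, A i n * R n j = (1 : Matrix (Fin S₁ ⊕ Fin S₂) _ F) i j := by
      intro i j
      have := congrFun (congrFun hR i) j
      simpa [Matrix.mul_apply] using this
    have hHP : H * P = 1 := by
      ext s s'
      have := key (Sum.inl s) (Sum.inl s')
      simpa [show ∀ n, A (Sum.inl s) n = H s n from fun n => rfl, Matrix.mul_apply, Matrix.one_apply, hP] using this
    have hHQ : H * Q = 0 := by
      ext s t
      have := key (Sum.inl s) (Sum.inr t)
      simpa [show ∀ n, A (Sum.inl s) n = H s n from fun n => rfl, Matrix.mul_apply, Matrix.one_apply, hQ] using this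
    have hKP : K * P = 0 := by
      ext t s
      have := key (Sum.inr t) (Sum.inl s)
      simpa [show ∀ n, A (Sum.inr t) n = K t n from fun n => rfl, Matrix.mul_apply, Matrix.one_apply, hP] using this
    have hKQ : K * Q = 1 := by
      ext t t'
      have := key (Sum.inr t) (Sum.inr t')
      simpa [show ∀ n, A (Sum.inr t) n = K t n from fun n => rfl, Matrix.mul_apply, Matrix.one_apply, hQ] using this
    refine ⟨(P * A₀ + Q * B₀ * RGᵀ)ᵀ, ?_⟩
    have h1 : H * (P * A₀ + Q * B₀ * RGᵀ) = A₀ := by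
      rw [Matrix.mul_add]
      rw [show H * (Q * B₀ * RGᵀ) = H * Q * B₀ * RGᵀ by
        simp [Matrix.mul_assoc]]
      rw [hHQ, ← Matrix.mul_assoc, hHP]
      simp
    have h2 : K * (P * A₀ + Q * B₀ * RGᵀ) * Gᵀ = B₀ := by
      rw [Matrix.mul_add, Matrix.add_mul]
      rw [show K * (P * A₀) = K * P * A₀ by rw [Matrix.mul_assoc], hKP]
      rw [show K * (Q * B₀ * RGᵀ) = K * Q * (B₀ * RGᵀ) by simp [Matrix.mul_assoc], hKQ]
      have : RGᵀ * Gᵀ = 1 := by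
        rw [← Matrix.transpose_mul, hRG, Matrix.transpose_one]
      simp [Matrix.mul_assoc, this]
    simp only [Φ, LinearMap.coe_mk, AddHom.coe_mk, Matrix.transpose_transpose]
    exact Prod.ext h1 h2
  -- the solution set is the kernel of Φ
  have hset : ∀ X : Matrix (Fin M) (Fin N) F,
      ((∀ m, H.mulVec (X m) = 0) ∧ K * Xᵀ * Gᵀ = 0) ↔ X ∈ LinearMap.ker Φ := by
    intro X
    simp only [LinearMap.mem_ker, Φ, LinearMap.coe_mk, AddHom.coe_mk, Prod.mk_eq_zero]
    constructor
    · rintro ⟨h1, h2⟩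
      refine ⟨?_, h2⟩
      ext s m
      have := congrFun (h1 m) s
      simpa [Matrix.mul_apply, Matrix.mulVec, dotProduct, mul_comm] using this
    · rintro ⟨h1, h2⟩
      refine ⟨fun m => ?_, h2⟩
      ext s
      have := congrFun (congrFun h1 s) m
      simpa [Matrix.mul_apply, Matrix.mulVec, dotProduct, mul_comm] using this
  have hcard : Nat.card {X : Matrix (Fin M) (Fin N) F //
        (∀ m, H.mulVec (X m) = 0) ∧ K * Xᵀ * Gᵀ = 0} =
      Nat.card (LinearMap.ker Φ) :=
    Nat.card_congr (Equiv.subtypeEquivRight hset)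
  rw [hcard]
  -- dimension count
  have hdim : finrank F (LinearMap.ker Φ) = M * N - (M * S₁ + L * S₂) := by
    have hrn := Φ.finrank_range_add_finrank_ker
    have hrange : LinearMap.range Φ = ⊤ := LinearMap.range_eq_top.2 hΦsurj
    rw [hrange] at hrn
    have hdom : finrank F (Matrix (Fin M) (Fin N) F) = M * N := by
      simp [Module.finrank_matrix]
    have hcod : finrank F (Matrix (Fin S₁) (Fin M) F × Matrix (Fin S₂) (Fin L) F)
        = S₁ * M + S₂ * L := by
      simp [Module.finrank_prod, Module.finrank_matrix]
    rw [finrank_top, hdom, hcod] at hrn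
    have hle : S₁ + S₂ ≤ N := by
      have h1 := hHK.fintype_card_le_finrank
      simp only [Fintype.card_sum, Fintype.card_fin, Module.finrank_pi,
        Module.finrank_self] at h1
      simpa using h1
    obtain ⟨d, hd⟩ : ∃ d, finrank F (LinearMap.ker Φ) = d := ⟨_, rfl⟩
    rw [hd] at hrn ⊢
    clear * - hrn
    rw [Nat.mul_comm M S₁, Nat.mul_comm L S₂]
    omega
  rw [← hdim]
  haveI : Fintype (LinearMap.ker Φ) := Fintype.ofFinite _
  rw [Nat.card_eq_fintype_card]
  exact card_eq_pow_finrank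
end

section
/- Let C ⊆ F_q^N × F_q^N be a linear code with dual C^⊥ (with respect to the standard bilinear form on F_q^{2N}). Then the support enumerators satisfy the MacWilliams-type identity: for all w, s ⊆ {1,…,N}, |C| · Λ_{C^⊥}(w,s) = Σ_{w′,s′ ⊆ {1,…,N}} Λ_C(w′,s′) · Π_{j=1}^{N} κ_q(w′_j, w_j) κ_q(s′_j, s_j), where κ_q(u,v) = 1 if v = 0; κ_q(u,v) = q−1 if u = 0 and v = 1; and κ_q(u,v) = −1 otherwise. -/
open Matrix

/-- The factor `κ_q(u,v)`: here `u,v` are the indicator values `j ∈ w'`, `j ∈ w`. -/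
def kappa {N : ℕ} (q : ℕ) (w' w : Finset (Fin N)) (j : Fin N) : ℤ :=
  if j ∉ w then 1 else if j ∉ w' then (q : ℤ) - 1 else -1

/-- The support enumerator `Λ_D(w,s)` of a set `D` of pairs of vectors. -/
noncomputable def suppEnum {F : Type} [Field F] [Fintype F] {N : ℕ}
    (D : Set ((Fin N → F) × (Fin N → F))) (w s : Finset (Fin N)) : ℕ :=
  Nat.card {p : (Fin N → F) × (Fin N → F) //
    p ∈ D ∧ {i | p.1 i ≠ 0} = (↑w : Set (Fin N)) ∧ {i | p.2 i ≠ 0} = (↑s : Set (Fin N))}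

open Finset

section aux

variable {F : Type} [Field F] [Fintype F] [DecidableEq F] {N : ℕ}

/-- coordinate value sets -/
def Aset (w : Finset (Fin N)) (j : Fin N) : Finset F :=
  if j ∈ w then Finset.univ \ {0} else {0}

lemma mem_piFinset_Aset (w : Finset (Fin N)) (x : Fin N → F) :
    x ∈ Fintype.piFinset (Aset w) ↔ {i | x i ≠ 0} = (↑w : Set (Fin N)) := by
  rw [Fintype.mem_piFinset, Set.ext_iff]
  refine forall_congr' fun j => ?_
  by_cases h : j ∈ w <;> simp [Aset, h]

lemma supp_filter_eq_iff (w : Finset (Fin N)) (x : Fin N → F) :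
    Finset.univ.filter (fun i => x i ≠ 0) = w ↔ {i | x i ≠ 0} = (↑w : Set (Fin N)) := by
  rw [← Finset.coe_inj, Finset.coe_filter]
  simp

variable {K : Type*} [Field K] (ψ : AddChar F K)

lemma addChar_sum {ι : Type*} (t : Finset ι) (f : ι → F) :
    ψ (∑ i ∈ t, f i) = ∏ i ∈ t, ψ (f i) := by
  induction t using Finset.cons_induction with
  | empty => simp
  | cons a t ha ih => rw [Finset.sum_cons, Finset.prod_cons, ψ.map_add_eq_mul, ih]

lemma coordSum (hψ : ψ.IsPrimitive) (w : Finset (Fin N)) (v : Fin N → F) (j : Fin N) :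
    ∑ a ∈ Aset w j, ψ (a * v j)
      = ((kappa (Fintype.card F) (Finset.univ.filter (fun i => v i ≠ 0)) w j : ℤ) : K) := by
  unfold kappa Aset
  by_cases hw : j ∈ w
  · rw [if_pos hw, if_neg (not_not_intro hw)]
    by_cases hv : v j = 0
    · have hj : j ∉ Finset.univ.filter (fun i => v i ≠ 0) := by simp [hv]
      rw [if_pos hj]
      have hcard : (Finset.univ \ {(0 : F)}).card = Fintype.card F - 1 := by
        rw [Finset.card_sdiff_of_subset (by simp)]; simp
      have h1 : 1 ≤ Fintype.card F := Fintype.card_pos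
      have : ∑ a ∈ Finset.univ \ ({0} : Finset F), ψ (a * v j)
          = ((Fintype.card F - 1 : ℕ) : K) := by
        simp [hv, hcard]
      rw [this]
      push_cast [h1]
      ring
    · have hj : j ∈ Finset.univ.filter (fun i => v i ≠ 0) := by simp [hv]
      rw [if_neg (not_not_intro hj)]
      have hsum := AddChar.sum_mulShift (v j) hψ
      rw [if_neg hv, Nat.cast_zero] at hsum
      rw [Finset.sum_sdiff_eq_sub (by simp : ({0} : Finset F) ⊆ Finset.univ), hsum,
        Finset.sum_singleton]
      simp
  · rw [if_neg hw]
    simp [hw]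

lemma vecSum (hψ : ψ.IsPrimitive) (w : Finset (Fin N)) (v : Fin N → F) :
    ∑ x ∈ Fintype.piFinset (Aset w), ψ (x ⬝ᵥ v)
      = ((∏ j, kappa (Fintype.card F) (Finset.univ.filter (fun i => v i ≠ 0)) w j : ℤ) : K) := by
  calc ∑ x ∈ Fintype.piFinset (Aset w), ψ (x ⬝ᵥ v)
      = ∑ x ∈ Fintype.piFinset (Aset w), ∏ j, ψ (x j * v j) := by
        refine Finset.sum_congr rfl fun x _ => ?_
        rw [dotProduct]
        exact addChar_sum ψ Finset.univ _
    _ = ∏ j, ∑ a ∈ Aset w j, ψ (a * v j) := (Finset.prod_univ_sum (Aset w) (fun j a => ψ (a * v j))).symm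
    _ = ∏ j, ((kappa (Fintype.card F) (Finset.univ.filter (fun i => v i ≠ 0)) w j : ℤ) : K) :=
        Finset.prod_congr rfl fun j _ => coordSum ψ hψ w v j
    _ = _ := (Int.cast_prod _ _).symm

end aux

section orth
variable {F : Type} [Field F] [Fintype F] [DecidableEq F] {N : ℕ}
variable {K : Type*} [Field K] (ψ : AddChar F K)

lemma orthSum (hψ : ψ.IsPrimitive) (C : Submodule F ((Fin N → F) × (Fin N → F)))
    [DecidablePred (· ∈ C)] (x : (Fin N → F) × (Fin N → F)) :
    ∑ c ∈ Finset.univ.filter (· ∈ C), ψ (x.1 ⬝ᵥ c.1 + x.2 ⬝ᵥ c.2)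
      = if (∀ c ∈ C, x.1 ⬝ᵥ c.1 + x.2 ⬝ᵥ c.2 = 0) then (Nat.card C : K) else 0 := by
  by_cases h : ∀ c ∈ C, x.1 ⬝ᵥ c.1 + x.2 ⬝ᵥ c.2 = 0
  · rw [if_pos h]
    have h2 : ∀ c ∈ Finset.univ.filter (· ∈ C), ψ (x.1 ⬝ᵥ c.1 + x.2 ⬝ᵥ c.2) = 1 :=
      fun c hc => by rw [h c (by simpa using hc), ψ.map_zero_eq_one]
    rw [Finset.sum_congr rfl h2, Finset.sum_const, nsmul_eq_mul, mul_one]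
    congr 1
    rw [Nat.card_eq_fintype_card]
    exact (Fintype.card_subtype (· ∈ C)).symm
  · rw [if_neg h]
    push_neg at h
    obtain ⟨c0, hc0, ha⟩ := h
    obtain ⟨t, ht⟩ := AddChar.ne_one_iff.mp (hψ ha)
    rw [AddChar.mulShift_apply] at ht
    set d : (Fin N → F) × (Fin N → F) := t • c0 with hd
    have hdC : d ∈ C := C.smul_mem t hc0
    have hBd : x.1 ⬝ᵥ d.1 + x.2 ⬝ᵥ d.2 = (x.1 ⬝ᵥ c0.1 + x.2 ⬝ᵥ c0.2) * t := by
      simp [hd, dotProduct_smul, smul_eq_mul]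
      ring
    have h1 : ∑ c ∈ Finset.univ.filter (· ∈ C), ψ (x.1 ⬝ᵥ (c + d).1 + x.2 ⬝ᵥ (c + d).2)
        = ∑ c ∈ Finset.univ.filter (· ∈ C), ψ (x.1 ⬝ᵥ c.1 + x.2 ⬝ᵥ c.2) := by
      refine Finset.sum_bijective (· + d) ((Equiv.addRight d).bijective) (fun c => ?_) (fun c _ => rfl)
      simp only [Finset.mem_filter, Finset.mem_univ, true_and]
      constructor
      · exact fun hc => C.add_mem hc hdC
      · intro hc
        have := C.sub_mem hc hdC
        simpa using this
    have h3 : ∀ c : (Fin N → F) × (Fin N → F),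
        ψ (x.1 ⬝ᵥ (c + d).1 + x.2 ⬝ᵥ (c + d).2)
          = ψ (x.1 ⬝ᵥ d.1 + x.2 ⬝ᵥ d.2) * ψ (x.1 ⬝ᵥ c.1 + x.2 ⬝ᵥ c.2) := by
      intro c
      rw [← ψ.map_add_eq_mul]
      congr 1
      simp [dotProduct_add]
      ring
    rw [Finset.sum_congr rfl (fun c _ => h3 c), ← Finset.mul_sum] at h1
    refine eq_zero_of_mul_eq_self_left ?_ h1
    rwa [hBd]
end orth

section main
variable {F : Type} [Field F] [Fintype F] {N : ℕ}

lemma suppEnum_eq_card (D : Set ((Fin N → F) × (Fin N → F))) (w s : Finset (Fin N))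
    [DecidablePred fun p : (Fin N → F) × (Fin N → F) =>
      p ∈ D ∧ {i | p.1 i ≠ 0} = (↑w : Set (Fin N)) ∧ {i | p.2 i ≠ 0} = (↑s : Set (Fin N))] :
    suppEnum D w s = (Finset.univ.filter (fun p : (Fin N → F) × (Fin N → F) =>
      p ∈ D ∧ {i | p.1 i ≠ 0} = (↑w : Set (Fin N)) ∧ {i | p.2 i ≠ 0} = (↑s : Set (Fin N)))).card := by
  classical
  rw [suppEnum, Nat.card_eq_fintype_card]
  exact Fintype.card_subtype _


/-- MacWilliams-type identity for support enumerators: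
`|C| ⬝ Λ_{C⊥}(w,s) = Σ_{w',s'} Λ_C(w',s') Π_j κ_q(w'_j,w_j) κ_q(s'_j,s_j)`. -/
theorem stmt_13 {F : Type} [Field F] [Fintype F] {N : ℕ}
    (C : Submodule F ((Fin N → F) × (Fin N → F))) (w s : Finset (Fin N)) :
    (Nat.card C : ℤ) *
        suppEnum {p | ∀ c ∈ C, p.1 ⬝ᵥ c.1 + p.2 ⬝ᵥ c.2 = 0} w s =
      ∑ w' : Finset (Fin N), ∑ s' : Finset (Fin N),
        (suppEnum (↑C : Set ((Fin N → F) × (Fin N → F))) w' s' : ℤ) *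
          ∏ j : Fin N,
            kappa (Fintype.card F) w' w j * kappa (Fintype.card F) s' s j := by
  classical
  have hch : ringChar ℂ ≠ ringChar F := by
    have hp : (ringChar F).Prime := CharP.char_is_prime F _
    rw [ringChar.eq_zero]
    exact fun h0 => hp.ne_zero h0.symm
  obtain ⟨n, ψ, hψ⟩ := AddChar.FiniteField.primitiveChar F ℂ hch
  set K := CyclotomicField n ℂ with hK
  haveI : CharZero K := charZero_of_injective_algebraMap (algebraMap ℂ K).injective
  set V := (Fin N → F) × (Fin N → F) with hV
  set CF : Finset V := Finset.univ.filter (· ∈ C) with hCF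
  set T : Finset V := (Fintype.piFinset (Aset w)) ×ˢ (Fintype.piFinset (Aset s)) with hT
  set D : Set V := {p | ∀ c ∈ C, p.1 ⬝ᵥ c.1 + p.2 ⬝ᵥ c.2 = 0} with hD
  -- Step A
  have hA : ∑ x ∈ T, ∑ c ∈ CF, ψ (x.1 ⬝ᵥ c.1 + x.2 ⬝ᵥ c.2)
      = (Nat.card C : K) * (suppEnum D w s : K) := by
    rw [Finset.sum_congr rfl (fun x _ => orthSum ψ hψ C x), ← Finset.sum_filter,
      Finset.sum_const, nsmul_eq_mul]
    have : T.filter (fun x => ∀ c ∈ C, x.1 ⬝ᵥ c.1 + x.2 ⬝ᵥ c.2 = 0)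
        = Finset.univ.filter (fun p : V =>
            p ∈ D ∧ {i | p.1 i ≠ 0} = (↑w : Set (Fin N)) ∧ {i | p.2 i ≠ 0} = (↑s : Set (Fin N))) := by
      ext p
      simp only [Finset.mem_filter, hT, Finset.mem_univ, true_and, hD, Set.mem_setOf_eq]
      constructor
      · rintro ⟨hpT, hpd⟩
        rw [Finset.mem_product] at hpT
        exact ⟨hpd, (mem_piFinset_Aset w p.1).mp hpT.1, (mem_piFinset_Aset s p.2).mp hpT.2⟩
      · rintro ⟨hpd, h1, h2⟩
        exact ⟨Finset.mem_product.mpr ⟨(mem_piFinset_Aset w p.1).mpr h1,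
          (mem_piFinset_Aset s p.2).mpr h2⟩, hpd⟩
    rw [this, ← suppEnum_eq_card]
    ring
  -- Step B
  have hB : ∑ x ∈ T, ∑ c ∈ CF, ψ (x.1 ⬝ᵥ c.1 + x.2 ⬝ᵥ c.2)
      = ∑ c ∈ CF,
          ((∏ j, kappa (Fintype.card F) (Finset.univ.filter (fun i => c.1 i ≠ 0)) w j : ℤ) : K)
            * ((∏ j, kappa (Fintype.card F) (Finset.univ.filter (fun i => c.2 i ≠ 0)) s j : ℤ) : K) := by
    rw [Finset.sum_comm]
    refine Finset.sum_congr rfl fun c _ => ?_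
    have : ∀ x ∈ T, ψ (x.1 ⬝ᵥ c.1 + x.2 ⬝ᵥ c.2) = ψ (x.1 ⬝ᵥ c.1) * ψ (x.2 ⬝ᵥ c.2) :=
      fun x _ => ψ.map_add_eq_mul _ _
    rw [Finset.sum_congr rfl this, hT,
      Finset.sum_product' (f := fun a b => ψ (a ⬝ᵥ c.1) * ψ (b ⬝ᵥ c.2))]
    rw [← Finset.sum_mul_sum, vecSum ψ hψ w c.1, vecSum ψ hψ s c.2]
  -- Step C
  have hC : ∑ c ∈ CF,
          ((∏ j, kappa (Fintype.card F) (Finset.univ.filter (fun i => c.1 i ≠ 0)) w j : ℤ) : K)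
            * ((∏ j, kappa (Fintype.card F) (Finset.univ.filter (fun i => c.2 i ≠ 0)) s j : ℤ) : K)
      = ∑ p : Finset (Fin N) × Finset (Fin N),
          (suppEnum (↑C : Set V) p.1 p.2 : K) *
            (((∏ j, kappa (Fintype.card F) p.1 w j : ℤ) : K)
              * ((∏ j, kappa (Fintype.card F) p.2 s j : ℤ) : K)) := by
    rw [← Finset.sum_fiberwise_of_maps_to
      (g := fun c : V => (Finset.univ.filter (fun i => c.1 i ≠ 0),
        Finset.univ.filter (fun i => c.2 i ≠ 0)))
      (fun c _ => Finset.mem_univ _)]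
    refine Finset.sum_congr rfl fun p _ => ?_
    have hfib : ∀ c ∈ CF.filter (fun c : V =>
        (Finset.univ.filter (fun i => c.1 i ≠ 0), Finset.univ.filter (fun i => c.2 i ≠ 0)) = p),
        ((∏ j, kappa (Fintype.card F) (Finset.univ.filter (fun i => c.1 i ≠ 0)) w j : ℤ) : K)
          * ((∏ j, kappa (Fintype.card F) (Finset.univ.filter (fun i => c.2 i ≠ 0)) s j : ℤ) : K)
        = ((∏ j, kappa (Fintype.card F) p.1 w j : ℤ) : K)
            * ((∏ j, kappa (Fintype.card F) p.2 s j : ℤ) : K) := by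
      intro c hc
      obtain ⟨-, hc2⟩ := Finset.mem_filter.mp hc
      rw [Prod.mk.injEq] at hc2
      rw [hc2.1, hc2.2]
    rw [Finset.sum_congr rfl hfib, Finset.sum_const, nsmul_eq_mul]
    have hcard : (CF.filter (fun c : V =>
        (Finset.univ.filter (fun i => c.1 i ≠ 0), Finset.univ.filter (fun i => c.2 i ≠ 0)) = p)).card
        = suppEnum (↑C : Set V) p.1 p.2 := by
      rw [suppEnum_eq_card]
      congr 1
      ext c
      simp only [hCF, Finset.filter_filter, Finset.mem_filter, Finset.mem_univ, true_and,
        Prod.ext_iff, SetLike.mem_coe, supp_filter_eq_iff]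
    rw [hcard]
  -- Put together
  have key : (((Nat.card C : ℤ) * suppEnum D w s : ℤ) : K)
      = ((∑ w' : Finset (Fin N), ∑ s' : Finset (Fin N),
          (suppEnum (↑C : Set V) w' s' : ℤ) *
            ∏ j : Fin N, kappa (Fintype.card F) w' w j * kappa (Fintype.card F) s' s j : ℤ) : K) := by
    rw [show (((Nat.card C : ℤ) * suppEnum D w s : ℤ) : K)
        = (Nat.card C : K) * (suppEnum D w s : K) by rw [Int.cast_mul, Int.cast_natCast, Int.cast_natCast]]
    rw [← hA, hB, hC, Fintype.sum_prod_type]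
    rw [Int.cast_sum]; simp only [Int.cast_sum, Int.cast_mul, Int.cast_prod, Int.cast_natCast]
    refine Finset.sum_congr rfl fun w' _ => Finset.sum_congr rfl fun s' _ => ?_
    rw [Finset.prod_mul_distrib]
  exact_mod_cast key
end main
end
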